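/- For every r ≥ 0 and every θ ∈ ℝ, with z = r·e^{iθ} ∈ ℂ, one has |e^z − 1| ≤ (e^r − 1)·e^{−r(1 − cos θ)/2}. -/

import Mathlib

open Real Complex

lemma aux_cosh (u v : ℝ) (hu : 0 ≤ u) (huv : u ≤ v) :
    (v^2 - u^2)/2 ≤ Real.cosh v - Real.cosh u := by
  have h1 : (v+u)/2 ≤ Real.sinh ((v+u)/2) := Real.self_le_sinh_iff.2 (by linarith)
  have h2 : (v-u)/2 ≤ Real.sinh ((v-u)/2) := Real.self_le_sinh_iff.2 (by linarith)
  have hid : Real.cosh v - Real.cosh u = 2 * Real.sinh ((v+u)/2) * Real.sinh ((v-u)/2) := by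
    rw [Real.cosh_eq, Real.cosh_eq, Real.sinh_eq, Real.sinh_eq]
    have e1 : Real.exp ((v+u)/2) * Real.exp ((v-u)/2) = Real.exp v := by
      rw [← Real.exp_add]; ring_nf
    have e2 : Real.exp ((v+u)/2) * Real.exp (-((v-u)/2)) = Real.exp u := by
      rw [← Real.exp_add]; ring_nf
    have e3 : Real.exp (-((v+u)/2)) * Real.exp ((v-u)/2) = Real.exp (-u) := by
      rw [← Real.exp_add]; ring_nf
    have e4 : Real.exp (-((v+u)/2)) * Real.exp (-((v-u)/2)) = Real.exp (-v) := by
      rw [← Real.exp_add]; ring_nf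
    rw [← e1, ← e2, ← e3, ← e4]; ring
  rw [hid]
  have hp : (0:ℝ) ≤ (v+u)/2 := by linarith
  have hq : (0:ℝ) ≤ (v-u)/2 := by linarith
  nlinarith [mul_le_mul h1 h2 hq (le_trans hp h1)]

lemma core_ineq (r θ : ℝ) (hr : 0 ≤ r) :
    Real.cosh (r * Real.cos θ) - Real.cos (r * Real.sin θ) ≤ Real.cosh r - 1 := by
  set a := r * Real.cos θ with ha
  set b := r * Real.sin θ with hb
  have habs : |a| ≤ r := by
    rw [ha, abs_mul, _root_.abs_of_nonneg hr]
    nlinarith [Real.abs_cos_le_one θ, abs_nonneg (Real.cos θ)]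
  have hcos : 1 - Real.cos b ≤ b^2/2 := by
    have h1 := Real.sin_sq_le_sq (x := b/2)
    have h2 := Real.sin_sq_add_cos_sq (b/2)
    have h3 : Real.cos b = Real.cos (2 * (b/2)) := by ring_nf
    rw [h3, Real.cos_two_mul]
    nlinarith
  have hch := aux_cosh |a| r (abs_nonneg a) habs
  rw [_root_.sq_abs] at hch
  rw [← Real.cosh_abs a]
  have hsum : a^2 + b^2 = r^2 := by
    have := Real.sin_sq_add_cos_sq θ
    rw [ha, hb]; nlinarith
  linarith

theorem abs_exp_sub_one_le (r θ : ℝ) (hr : 0 ≤ r) :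
    ‖Complex.exp ((r : ℂ) * Complex.exp ((θ : ℂ) * Complex.I)) - 1‖
      ≤ (Real.exp r - 1) * Real.exp (-r * (1 - Real.cos θ) / 2) := by
  set a := r * Real.cos θ with ha
  set b := r * Real.sin θ with hb
  set z := (r : ℂ) * Complex.exp ((θ : ℂ) * Complex.I) with hz
  have hzre : z.re = a := by
    simp [hz, Complex.exp_re, Complex.exp_im, Complex.mul_re, ha]
  have hzim : z.im = b := by
    simp [hz, Complex.exp_re, Complex.exp_im, Complex.mul_im, hb]
  have hre : (Complex.exp z).re = Real.exp a * Real.cos b := by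
    rw [Complex.exp_re, hzre, hzim]
  have him : (Complex.exp z).im = Real.exp a * Real.sin b := by
    rw [Complex.exp_im, hzre, hzim]
  set A := Real.exp a with hA
  set R := Real.exp r with hR
  set W := Real.exp (-r * (1 - Real.cos θ) / 2) with hW
  have hsq : (‖Complex.exp z - 1‖)^2
      = (A * Real.cos b - 1)^2 + (A * Real.sin b)^2 := by
    rw [Complex.sq_norm, Complex.normSq_apply, Complex.sub_re, Complex.sub_im,
      Complex.one_re, Complex.one_im, hre, him]
    ring
  have hW2 : W * W = Real.exp (a - r) := by
    rw [hW, ← Real.exp_add]; congr 1; rw [ha]; ring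
  have hAR : Real.exp (a - r) * R = A := by
    rw [hR, hA, ← Real.exp_add]; congr 1; ring
  have hcore := core_ineq r θ hr
  rw [← ha, ← hb, Real.cosh_eq, Real.cosh_eq, ← hA, ← hR] at hcore
  have hAi : A * Real.exp (-a) = 1 := by rw [hA, ← Real.exp_add]; simp
  
  have hRi : R * Real.exp (-r) = 1 := by rw [hR, ← Real.exp_add]; simp
  have hpy := Real.sin_sq_add_cos_sq b
  have hApos : 0 < A := Real.exp_pos a
  have key : (A * Real.cos b - 1)^2 + (A * Real.sin b)^2 ≤ ((R - 1) * W)^2 := by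
    have hmul := mul_le_mul_of_nonneg_left hcore (le_of_lt (by linarith : (0:ℝ) < 2*A))
    have hAr : A * Real.exp (-r) = Real.exp (a - r) := by
      rw [hA, ← Real.exp_add, sub_eq_add_neg]
    have hW2' : W^2 = Real.exp (a - r) := by rw [sq, hW2]
    have hexp : ((R - 1) * W)^2 = (R - 1)^2 * Real.exp (a - r) := by
      rw [mul_pow, hW2']
    have hL : (A * Real.cos b - 1)^2 + (A * Real.sin b)^2 = A^2 - 2*A*Real.cos b + 1 := by
      linear_combination (A^2) * hpy
    have hRt : (R - 1)^2 * Real.exp (a - r) = A*R - 2*A + Real.exp (a - r) := by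
      linear_combination (R - 2) * hAR
    rw [hexp, hRt, hL]
    nlinarith [hmul, hAi, hAr]
  have hRone : (1:ℝ) ≤ R := by rw [hR]; exact Real.one_le_exp hr
  have hWpos : 0 < W := Real.exp_pos _
  have habs := norm_nonneg (Complex.exp z - 1)
  nlinarith [hsq, key, habs, mul_nonneg (by linarith : (0:ℝ) ≤ R - 1) hWpos.le, sq_nonneg (‖Complex.exp z - 1‖ + (R-1)*W)]
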